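/- arXiv:2404.10515 — 5 statements merged into one kernel-verified Lean document; each statement's English description precedes it below -/
import Mathlib

section
/- Let n ∈ ℕ, let f : (Fin n → ℝ) → ℝ be twice continuously differentiable (ContDiff ℝ 2 on EuclideanSpace, identifying (Fin n → ℝ) with ℝⁿ), and let p q : Fin n with p ≠ q. If there exist a point x : Fin n → ℝ and real numbers a, b₁, b₂, δ such that f(Function.update (Function.update x q b₁) p (a+δ)) − f(Function.update (Function.update x q b₁) p a) ≠ f(Function.update (Function.update x q b₂) p (a+δ)) − f(Function.update (Function.update x q b₂) p a), then x_p and x_q directly interact, i.e., there exists a point x* : Fin n → ℝ at which the second mixed partial derivative of f in directions p and q is nonzero: iteratedFDeriv ℝ 2 f x* applied to (e_p, e_q) ≠ 0, where e_p, e_q are the standard basis vectors. -/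
private lemma update_eq_add_smul (n : ℕ) (p : Fin n) (y : Fin n → ℝ) (s : ℝ) :
    Function.update y p s = Function.update y p 0 + s • (Pi.single p 1 : Fin n → ℝ) := by
  funext i
  rcases eq_or_ne i p with h | h
  · subst h; simp
  · simp [Function.update_apply, Pi.single_apply, h]

theorem dg_finite_difference_detects_direct_interaction
    (n : ℕ) (f : (Fin n → ℝ) → ℝ) (hf : ContDiff ℝ 2 f)
    (p q : Fin n) (hpq : p ≠ q)
    (x : Fin n → ℝ) (a b₁ b₂ δ : ℝ)
    (hne : f (Function.update (Function.update x q b₁) p (a + δ)) -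
        f (Function.update (Function.update x q b₁) p a) ≠
      f (Function.update (Function.update x q b₂) p (a + δ)) -
        f (Function.update (Function.update x q b₂) p a)) :
    ∃ xstar : Fin n → ℝ,
      iteratedFDeriv ℝ 2 f xstar ![Pi.single p (1 : ℝ), Pi.single q (1 : ℝ)] ≠ 0 := by
  by_contra hcon
  push_neg at hcon
  set v : Fin n → ℝ := Pi.single p 1 with hv
  set w : Fin n → ℝ := Pi.single q 1 with hw
  have H : ∀ y, fderiv ℝ (fderiv ℝ f) y v w = 0 := by
    intro y
    have h := hcon y
    rwa [iteratedFDeriv_two_apply] at h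
  have hfd : Differentiable ℝ f := hf.differentiable two_ne_zero
  have hfd1 : ContDiff ℝ 1 (fderiv ℝ f) := hf.fderiv_right (by norm_num)
  have hfd' : Differentiable ℝ (fderiv ℝ f) := hfd1.differentiable one_ne_zero
  set F : (Fin n → ℝ) → ℝ := fun y => fderiv ℝ f y w with hF
  -- F composed with a line in direction v has zero derivative
  have hFline : ∀ (z : Fin n → ℝ) (s : ℝ),
      HasDerivAt (fun s : ℝ => F (z + s • v)) 0 s := by
    intro z s
    have hline : HasDerivAt (fun s : ℝ => z + s • v) v s := by
      simpa using ((hasDerivAt_id s).smul_const v).const_add z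
    have hFder : HasFDerivAt F
        ((ContinuousLinearMap.apply ℝ ℝ w).comp (fderiv ℝ (fderiv ℝ f) (z + s • v)))
        (z + s • v) :=
      (ContinuousLinearMap.apply ℝ ℝ w).hasFDerivAt.comp _ (hfd' _).hasFDerivAt
    have := hFder.comp_hasDerivAt s hline
    simp [H] at this
    exact this
  have hFconst : ∀ (z : Fin n → ℝ), F (z + (a + δ) • v) = F (z + a • v) := by
    intro z
    have hdiff : Differentiable ℝ (fun s : ℝ => F (z + s • v)) :=
      fun s => (hFline z s).differentiableAt
    have hderiv : ∀ s, deriv (fun s : ℝ => F (z + s • v)) s = 0 :=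
      fun s => (hFline z s).deriv
    exact is_const_of_deriv_eq_zero hdiff hderiv (a + δ) a
  -- the finite-difference function of t
  set h : ℝ → ℝ := fun t =>
    f (Function.update (Function.update x q t) p (a + δ)) -
      f (Function.update (Function.update x q t) p a) with hh
  have hline' : ∀ (s t : ℝ),
      HasDerivAt (fun t : ℝ => f (Function.update (Function.update x q t) p s))
        (fderiv ℝ f (Function.update (Function.update x q t) p s) w) t := by
    intro s t
    have hcomm : ∀ t : ℝ, Function.update (Function.update x q t) p s =
        Function.update (Function.update x p s) q 0 + t • w := by
      intro t
      rw [Function.update_comm hpq.symm, update_eq_add_smul n q]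
    have hline : HasDerivAt
        (fun t : ℝ => Function.update (Function.update x p s) q 0 + t • w) w t := by
      simpa using ((hasDerivAt_id t).smul_const w).const_add (Function.update (Function.update x p s) q 0)
    have key := (hfd _).hasFDerivAt.comp_hasDerivAt t hline
    have hfun : (fun t : ℝ => f (Function.update (Function.update x q t) p s)) =
        f ∘ (fun t : ℝ => Function.update (Function.update x p s) q 0 + t • w) := by
      funext u; rw [Function.comp_apply, ← hcomm]
    rw [hfun, hcomm t]
    exact key
  have hderivh : ∀ t, HasDerivAt h 0 t := by
    intro t
    have h1 := hline' (a + δ) t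
    have h2 := hline' a t
    have := h1.sub h2
    have hz : fderiv ℝ f (Function.update (Function.update x q t) p (a + δ)) w -
        fderiv ℝ f (Function.update (Function.update x q t) p a) w = 0 := by
      have e1 : Function.update (Function.update x q t) p (a + δ) =
          Function.update (Function.update x q t) p 0 + (a + δ) • v :=
        update_eq_add_smul n p _ _
      have e2 : Function.update (Function.update x q t) p a =
          Function.update (Function.update x q t) p 0 + a • v :=
        update_eq_add_smul n p _ _
      rw [e1, e2]
      have := hFconst (Function.update (Function.update x q t) p 0)
      simp only [hF] at this
      rw [this, sub_self]
    rw [hz] at this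
    exact this
  have : h b₁ = h b₂ := by
    have hdiff : Differentiable ℝ h := fun t => (hderivh t).differentiableAt
    exact is_const_of_deriv_eq_zero hdiff (fun t => (hderivh t).deriv) b₁ b₂
  exact hne this
end

section
/- Let n ∈ ℕ, let f : (Fin n → ℝ) → ℝ be twice continuously differentiable, and let p q : Fin n with p ≠ q. If x_p and x_q directly interact (there exists x* with the second mixed partial derivative of f in directions p and q nonzero at x*, i.e., iteratedFDeriv ℝ 2 f x* (e_p, e_q) ≠ 0), then there exist a point x : Fin n → ℝ and real numbers a, b₁, b₂, δ with δ ≠ 0 and b₁ ≠ b₂ such that f(Function.update (Function.update x q b₁) p (a+δ)) − f(Function.update (Function.update x q b₁) p a) ≠ f(Function.update (Function.update x q b₂) p (a+δ)) − f(Function.update (Function.update x q b₂) p a). -/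
/-- If `g` has derivative `L` at `x` and is constant along the line through `x`
in direction `v`, then `L v = 0`. -/
lemma line_const_fderiv_apply_zero {n : ℕ} {g : (Fin n → ℝ) → ℝ}
    {L : (Fin n → ℝ) →L[ℝ] ℝ} {x v : Fin n → ℝ}
    (hg : HasFDerivAt g L x) (hconst : ∀ t : ℝ, g (x + t • v) = g x) :
    L v = 0 := by
  have hline : HasDerivAt (fun t : ℝ => x + t • v) v 0 := by
    simpa using ((hasDerivAt_id (0 : ℝ)).smul_const v).const_add x
  have hg' : HasFDerivAt g L (x + (0 : ℝ) • v) := by simpa using hg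
  have h1 : HasDerivAt (fun t : ℝ => g (x + t • v)) (L v) 0 :=
    hg'.comp_hasDerivAt 0 hline
  have h2 : HasDerivAt (fun t : ℝ => g (x + t • v)) 0 0 := by
    have : (fun t : ℝ => g (x + t • v)) = fun _ => g x := funext hconst
    rw [this]; exact hasDerivAt_const 0 _
  exact h1.unique h2

theorem dg_direct_interaction_has_finite_difference_witness
    (n : ℕ) (f : (Fin n → ℝ) → ℝ) (hf : ContDiff ℝ 2 f)
    (p q : Fin n) (hpq : p ≠ q)
    (hint : ∃ xstar : Fin n → ℝ,
      iteratedFDeriv ℝ 2 f xstar ![Pi.single p (1 : ℝ), Pi.single q (1 : ℝ)] ≠ 0) :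
    ∃ (x : Fin n → ℝ) (a b₁ b₂ δ : ℝ), δ ≠ 0 ∧ b₁ ≠ b₂ ∧
      f (Function.update (Function.update x q b₁) p (a + δ)) -
        f (Function.update (Function.update x q b₁) p a) ≠
      f (Function.update (Function.update x q b₂) p (a + δ)) -
        f (Function.update (Function.update x q b₂) p a) := by
  classical
  by_contra hcon
  push_neg at hcon
  obtain ⟨xstar, hxstar⟩ := hint
  set ep : Fin n → ℝ := Pi.single p 1 with hep
  set eq : Fin n → ℝ := Pi.single q 1 with heq
  -- remove the side conditions from hcon
  have H' : ∀ (x : Fin n → ℝ) (a b₁ b₂ δ : ℝ),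
      f (Function.update (Function.update x q b₁) p (a + δ)) -
        f (Function.update (Function.update x q b₁) p a) =
      f (Function.update (Function.update x q b₂) p (a + δ)) -
        f (Function.update (Function.update x q b₂) p a) := by
    intro x a b₁ b₂ δ
    by_cases hδ : δ = 0
    · simp [hδ]
    by_cases hb : b₁ = b₂
    · rw [hb]
    exact hcon x a b₁ b₂ δ hδ hb
  have hupd : ∀ (y : Fin n → ℝ) (δ : ℝ),
      Function.update y p (y p + δ) = y + δ • ep := by
    intro y δ
    funext i
    by_cases hi : i = p
    · subst hi; simp [hep]
    · simp [hep, Function.update_of_ne hi, Pi.single_eq_of_ne hi]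
  -- the increment in direction p is invariant under changing coordinate q
  have hA : ∀ (y : Fin n → ℝ) (δ b : ℝ),
      f (Function.update y q b + δ • ep) - f (Function.update y q b) =
      f (y + δ • ep) - f y := by
    intro y δ b
    have := H' y (y p) b (y q) δ
    have hpy : Function.update y q b p = y p := Function.update_of_ne hpq _ _
    have hpy2 : Function.update y q (y q) p = y p := Function.update_of_ne hpq _ _
    rw [show Function.update (Function.update y q b) p (y p + δ)
          = Function.update y q b + δ • ep by
        rw [← hpy]; exact hupd _ δ,
      show Function.update (Function.update y q b) p (y p)
          = Function.update y q b by rw [← hpy]; exact Function.update_eq_self _ _,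
      show Function.update (Function.update y q (y q)) p (y p + δ)
          = y + δ • ep by
        rw [Function.update_eq_self, ← hupd y δ],
      show Function.update (Function.update y q (y q)) p (y p) = y by
        rw [Function.update_eq_self, Function.update_eq_self]] at this
    exact this
  have hfd : Differentiable ℝ f := hf.differentiable two_ne_zero
  -- Step B : fderiv f (y + δ • ep) eq = fderiv f y eq
  have hB : ∀ (y : Fin n → ℝ) (δ : ℝ),
      fderiv ℝ f (y + δ • ep) eq = fderiv ℝ f y eq := by
    intro y δ
    set c : Fin n → ℝ := δ • ep with hc
    have h1 : HasFDerivAt (fun z => f (z + c)) (fderiv ℝ f (y + c)) y := by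
      have := (hfd (y + c)).hasFDerivAt.comp y
        ((hasFDerivAt_id y).add_const c)
      simpa [Function.comp_def] using this
    have h2 : HasFDerivAt (fun z => f (z + c) - f z)
        (fderiv ℝ f (y + c) - fderiv ℝ f y) y := h1.sub (hfd y).hasFDerivAt
    have hconst : ∀ t : ℝ, f (y + t • eq + c) - f (y + t • eq) = f (y + c) - f y := by
      intro t
      have hupdq : y + t • eq = Function.update y q (y q + t) := by
        funext i
        by_cases hi : i = q
        · subst hi; simp [heq]
        · simp [heq, Function.update_of_ne hi, Pi.single_eq_of_ne hi]
      rw [hupdq]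
      exact hA y δ (y q + t)
    have := line_const_fderiv_apply_zero h2 hconst
    have h3 : fderiv ℝ f (y + c) eq - fderiv ℝ f y eq = 0 := by
      simpa using this
    linarith
  -- Step C : the map g y := fderiv f y eq is constant in direction ep
  set g : (Fin n → ℝ) → ℝ := fun y => fderiv ℝ f y eq with hg
  have hfC1 : ContDiff ℝ 1 (fderiv ℝ f) := by
    have := hf.fderiv_right (m := 1) (by norm_num)
    exact this
  have hgd : Differentiable ℝ (fderiv ℝ f) := hfC1.differentiable one_ne_zero
  have hGder : HasFDerivAt g
      (((fderiv ℝ f xstar).comp (0 : (Fin n → ℝ) →L[ℝ] (Fin n → ℝ))) +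
        (fderiv ℝ (fderiv ℝ f) xstar).flip eq) xstar := by
    exact (hgd xstar).hasFDerivAt.clm_apply (hasFDerivAt_const eq xstar)
  have hgconst : ∀ t : ℝ, g (xstar + t • ep) = g xstar := by
    intro t; exact hB xstar t
  have hzero := line_const_fderiv_apply_zero hGder hgconst
  have hmix : fderiv ℝ (fderiv ℝ f) xstar ep eq = 0 := by
    simpa using hzero
  apply hxstar
  rw [iteratedFDeriv_two_apply]
  simpa using hmix
end

section
/- Let n ∈ ℕ, let f : (Fin n → ℝ) → ℝ, and let X₁, X₂ ⊆ Fin n be disjoint sets of coordinates. Suppose there exist g, h : (Fin n → ℝ) → ℝ with f = g + h, where g does not depend on any coordinate in X₂ (for all x, all q ∈ X₂ and all v, g (Function.update x q v) = g x) and h does not depend on any coordinate in X₁. Then for every point x* : Fin n → ℝ, all vectors u₁, u₂ : Fin n → ℝ with u₁ supported on X₁ (u₁ i = 0 for i ∉ X₁) and u₂ supported on X₂ (u₂ i = 0 for i ∉ X₂), and all real numbers l₁, l₂: f(x* + l₁·u₁ + l₂·u₂) − f(x* + l₂·u₂) = f(x* + l₁·u₁) − f(x*). -/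
lemma rdg_aux {n : ℕ} (φ : (Fin n → ℝ) → ℝ) (S : Set (Fin n))
    (hφ : ∀ x, ∀ q ∈ S, ∀ v : ℝ, φ (Function.update x q v) = φ x) :
    ∀ (T : Finset (Fin n)) (x w : Fin n → ℝ), (∀ i ∉ S, w i = 0) →
      (∀ i ∉ T, w i = 0) → φ (x + w) = φ x := by
  intro T
  induction T using Finset.induction with
  | empty =>
    intro x w _ hT
    have : w = 0 := funext fun i => hT i (Finset.notMem_empty i)
    simp [this]
  | @insert a T' ha ih =>
    intro x w hS hT
    set w' : Fin n → ℝ := Function.update w a 0 with hw'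
    have hS' : ∀ i ∉ S, w' i = 0 := by
      intro i hi
      by_cases h : i = a
      · simp [hw', h]
      · simp [hw', Function.update_of_ne h, hS i hi]
    have hT' : ∀ i ∉ T', w' i = 0 := by
      intro i hi
      by_cases h : i = a
      · simp [hw', h]
      · exact by simp [hw', Function.update_of_ne h,
          hT i (by simp [Finset.mem_insert, h, hi])]
    have key : x + w = Function.update (x + w') a (x a + w a) := by
      funext i
      by_cases h : i = a
      · subst h; simp
      · simp [Function.update_of_ne h, hw']
    by_cases haS : a ∈ S
    · rw [key, hφ _ a haS, ih x w' hS' hT']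
    · have : w a = 0 := hS a haS
      have hww : w = w' := by
        funext i
        by_cases h : i = a
        · simp [hw', h, this]
        · simp [hw', Function.update_of_ne h]
      rw [hww] at *
      exact ih x w' hS' hT'

theorem rdg_separable_set_difference_invariant
    (n : ℕ) (f : (Fin n → ℝ) → ℝ) (X₁ X₂ : Set (Fin n)) (hdisj : Disjoint X₁ X₂)
    (g h : (Fin n → ℝ) → ℝ) (hf : f = g + h)
    (hg : ∀ (x : Fin n → ℝ), ∀ q ∈ X₂, ∀ v : ℝ, g (Function.update x q v) = g x)
    (hh : ∀ (x : Fin n → ℝ), ∀ p ∈ X₁, ∀ v : ℝ, h (Function.update x p v) = h x) :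
    ∀ (xstar u₁ u₂ : Fin n → ℝ),
      (∀ i ∉ X₁, u₁ i = 0) → (∀ i ∉ X₂, u₂ i = 0) →
      ∀ l₁ l₂ : ℝ,
        f (xstar + l₁ • u₁ + l₂ • u₂) - f (xstar + l₂ • u₂) =
        f (xstar + l₁ • u₁) - f xstar := by
  intro xstar u₁ u₂ h1 h2 l₁ l₂
  subst hf
  have hu1 : ∀ i ∉ X₁, (l₁ • u₁) i = 0 := fun i hi => by simp [h1 i hi]
  have hu2 : ∀ i ∉ X₂, (l₂ • u₂) i = 0 := fun i hi => by simp [h2 i hi]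
  have ginv : ∀ x : Fin n → ℝ, g (x + l₂ • u₂) = g x := fun x =>
    rdg_aux g X₂ hg Finset.univ x _ hu2 (by simp)
  have hinv : ∀ x : Fin n → ℝ, h (x + l₁ • u₁) = h x := fun x =>
    rdg_aux h X₁ hh Finset.univ x _ hu1 (by simp)
  simp only [Pi.add_apply]
  rw [ginv (xstar + l₁ • u₁), ginv xstar]
  have : xstar + l₁ • u₁ + l₂ • u₂ = xstar + l₂ • u₂ + l₁ • u₁ := by ring
  rw [this, hinv (xstar + l₂ • u₂), hinv xstar]
  ring
end

section
/- Let n ∈ ℕ, let f : (Fin n → ℝ) → ℝ be twice continuously differentiable, and let X₁, X₂ ⊆ Fin n be disjoint sets of coordinates. Suppose there exist a point x* : Fin n → ℝ, vectors u₁, u₂ : Fin n → ℝ with u₁ supported on X₁ and u₂ supported on X₂, and real numbers l₁, l₂ > 0 such that f(x* + l₁·u₁ + l₂·u₂) − f(x* + l₂·u₂) ≠ f(x* + l₁·u₁) − f(x*). Then X₁ interacts with X₂: there exist i ∈ X₁, j ∈ X₂ and a point y : Fin n → ℝ such that the second mixed partial derivative of f in directions i and j is nonzero at y, i.e., iteratedFDeriv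 ℝ 2 f y (e_i, e_j) ≠ 0. -/
theorem rdg_set_finite_difference_detects_interaction
    (n : ℕ) (f : (Fin n → ℝ) → ℝ) (hf : ContDiff ℝ 2 f)
    (X₁ X₂ : Set (Fin n)) (hdisj : Disjoint X₁ X₂)
    (xstar u₁ u₂ : Fin n → ℝ)
    (hu₁ : ∀ i ∉ X₁, u₁ i = 0) (hu₂ : ∀ i ∉ X₂, u₂ i = 0)
    (l₁ l₂ : ℝ) (hl₁ : 0 < l₁) (hl₂ : 0 < l₂)
    (hne : f (xstar + l₁ • u₁ + l₂ • u₂) - f (xstar + l₂ • u₂) ≠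
      f (xstar + l₁ • u₁) - f xstar) :
    ∃ i ∈ X₁, ∃ j ∈ X₂, ∃ y : Fin n → ℝ,
      iteratedFDeriv ℝ 2 f y ![Pi.single i (1 : ℝ), Pi.single j (1 : ℝ)] ≠ 0 := by
  by_contra hcon
  push_neg at hcon
  apply hne
  have hfd : Differentiable ℝ f := hf.differentiable (by norm_num)
  have hF : ContDiff ℝ 1 (fderiv ℝ f) := hf.fderiv_right (by norm_num)
  have hFd : Differentiable ℝ (fderiv ℝ f) := hF.differentiable (by norm_num)
  -- Core vanishing: the second derivative in directions u₁, u₂ vanishes everywhere.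
  have hA : ∀ y : Fin n → ℝ, fderiv ℝ (fderiv ℝ f) y u₁ u₂ = 0 := by
    intro y
    have hsingle : ∀ (i j : Fin n),
        fderiv ℝ (fderiv ℝ f) y (Pi.single i (u₁ i)) (Pi.single j (u₂ j)) = 0 := by
      intro i j
      by_cases h1 : u₁ i = 0
      · simp [h1]
      by_cases h2 : u₂ j = 0
      · simp [h2]
      have hi : i ∈ X₁ := by by_contra hx; exact h1 (hu₁ i hx)
      have hj : j ∈ X₂ := by by_contra hx; exact h2 (hu₂ j hx)
      have hz := hcon i hi j hj y
      rw [iteratedFDeriv_two_apply] at hz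
      simp only [Matrix.cons_val_zero, Matrix.cons_val_one, Matrix.head_cons] at hz
      have e1 : Pi.single i (u₁ i) = u₁ i • (Pi.single i 1 : Fin n → ℝ) := by
        ext k; rcases eq_or_ne k i with h | h <;> simp [h, Pi.single_apply]
      have e2 : Pi.single j (u₂ j) = u₂ j • (Pi.single j 1 : Fin n → ℝ) := by
        ext k; rcases eq_or_ne k j with h | h <;> simp [h, Pi.single_apply]
      rw [e1, e2]
      simp [hz]
    calc fderiv ℝ (fderiv ℝ f) y u₁ u₂
        = fderiv ℝ (fderiv ℝ f) y (∑ i, Pi.single i (u₁ i))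
            (∑ j, Pi.single j (u₂ j)) := by
          rw [Finset.univ_sum_single, Finset.univ_sum_single]
      _ = ∑ i, ∑ j, fderiv ℝ (fderiv ℝ f) y (Pi.single i (u₁ i))
            (Pi.single j (u₂ j)) := by
          simp only [map_sum, ContinuousLinearMap.sum_apply]
          rw [Finset.sum_comm]
      _ = 0 := by
          apply Finset.sum_eq_zero
          intro i _
          exact Finset.sum_eq_zero fun j _ => hsingle i j
  -- φ z = derivative of f at z in direction u₂
  set φ : (Fin n → ℝ) → ℝ := fun z => fderiv ℝ f z u₂ with hφdef
  have hφ : ∀ p : Fin n → ℝ, HasFDerivAt φ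
      ((ContinuousLinearMap.apply ℝ ℝ u₂).comp (fderiv ℝ (fderiv ℝ f) p)) p := by
    intro p
    exact (ContinuousLinearMap.apply ℝ ℝ u₂).hasFDerivAt.comp p (hFd p).hasFDerivAt
  have hline : ∀ (x v : Fin n → ℝ) (s : ℝ),
      HasDerivAt (fun t : ℝ => x + t • v) v s := by
    intro x v s
    simpa using ((hasDerivAt_id s).smul_const v).const_add x
  -- ψ : φ is constant along direction u₁
  have hψ : ∀ (x : Fin n → ℝ) (s : ℝ),
      HasDerivAt (fun t : ℝ => φ (x + t • u₁)) 0 s := by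
    intro x s
    have h := (hφ (x + s • u₁)).comp_hasDerivAt s (hline x u₁ s)
    simp [hA] at h
    exact h
  have hφconst : ∀ x : Fin n → ℝ, φ (x + l₁ • u₁) = φ x := by
    intro x
    have h := is_const_of_deriv_eq_zero (f := fun t : ℝ => φ (x + t • u₁))
      (fun t => (hψ x t).differentiableAt) (fun t => (hψ x t).deriv) l₁ 0
    simpa using h
  -- g is constant
  have hg : ∀ t : ℝ, HasDerivAt
      (fun t : ℝ => f (xstar + l₁ • u₁ + t • u₂) - f (xstar + t • u₂)) 0 t := by
    intro t
    have h1 : HasDerivAt (fun t : ℝ => f (xstar + l₁ • u₁ + t • u₂))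
        (φ (xstar + l₁ • u₁ + t • u₂)) t :=
      (hfd _).hasFDerivAt.comp_hasDerivAt t (hline (xstar + l₁ • u₁) u₂ t)
    have h2 : HasDerivAt (fun t : ℝ => f (xstar + t • u₂))
        (φ (xstar + t • u₂)) t :=
      (hfd _).hasFDerivAt.comp_hasDerivAt t (hline xstar u₂ t)
    have key : φ (xstar + l₁ • u₁ + t • u₂) = φ (xstar + t • u₂) := by
      have := hφconst (xstar + t • u₂)
      rw [← this]
      ring_nf
    have h3 := h1.sub h2
    rw [key, sub_self] at h3
    exact h3
  have hconst := is_const_of_deriv_eq_zero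
    (f := fun t : ℝ => f (xstar + l₁ • u₁ + t • u₂) - f (xstar + t • u₂))
    (fun t => (hg t).differentiableAt) (fun t => (hg t).deriv) l₂ 0
  simpa using hconst
end

section
/- Let n ∈ ℕ, let f : (Fin n → ℝ) → ℝ be twice continuously differentiable, let p q : Fin n with p ≠ q, and suppose the second mixed partial derivative of f in directions p and q vanishes everywhere: iteratedFDeriv ℝ 2 f y (e_p, e_q) = 0 for all y : Fin n → ℝ. Then for every x : Fin n → ℝ and all δ, γ ∈ ℝ, the second-order rectangle difference vanishes: f(x + δ·e_p + γ·e_q) − f(x + γ·e_q) − f(x + δ·e_p) + f(x) = 0. -/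
theorem no_direct_interaction_rectangle_difference_vanishes
    (n : ℕ) (f : (Fin n → ℝ) → ℝ) (hf : ContDiff ℝ 2 f)
    (p q : Fin n) (hpq : p ≠ q)
    (hzero : ∀ y : Fin n → ℝ,
      iteratedFDeriv ℝ 2 f y ![Pi.single p (1 : ℝ), Pi.single q (1 : ℝ)] = 0) :
    ∀ (x : Fin n → ℝ) (δ γ : ℝ),
      f (x + δ • (Pi.single p (1 : ℝ) : Fin n → ℝ) +
          γ • (Pi.single q (1 : ℝ) : Fin n → ℝ)) -
        f (x + γ • (Pi.single q (1 : ℝ) : Fin n → ℝ)) -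
        f (x + δ • (Pi.single p (1 : ℝ) : Fin n → ℝ)) + f x = 0 := by
  intro x δ γ
  set ep : Fin n → ℝ := Pi.single p (1 : ℝ) with hep
  set eq' : Fin n → ℝ := Pi.single q (1 : ℝ) with heq
  have hf1 : Differentiable ℝ f := hf.differentiable (by norm_num)
  have hf2 : Differentiable ℝ (fderiv ℝ f) :=
    (hf.fderiv_right (m := 1) (by norm_num)).differentiable (by norm_num)
  have hmix : ∀ y, fderiv ℝ (fderiv ℝ f) y eq' ep = 0 := by
    intro y
    have hsym := second_derivative_symmetric (f := f) (f' := fderiv ℝ f)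
      (fun z => (hf1 z).hasFDerivAt) ((hf2 y).hasFDerivAt) ep eq'
    have h2 := hzero y
    rw [iteratedFDeriv_two_apply] at h2
    simpa [hsym] using h2
  have hline : ∀ (a v : Fin n → ℝ) (t : ℝ),
      HasDerivAt (fun s : ℝ => a + s • v) v t := by
    intro a v t
    simpa using ((hasDerivAt_id t).smul_const v).const_add a
  have key : ∀ b : Fin n → ℝ, fderiv ℝ f (b + γ • eq') ep = fderiv ℝ f b ep := by
    intro b
    have hψ : ∀ s : ℝ, HasDerivAt (fun s : ℝ => fderiv ℝ f (b + s • eq') ep) 0 s := by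
      intro s
      have h1 : HasDerivAt (fun s : ℝ => fderiv ℝ f (b + s • eq'))
          (fderiv ℝ (fderiv ℝ f) (b + s • eq') eq') s :=
        (hf2 _).hasFDerivAt.comp_hasDerivAt s (hline b eq' s)
      have h2 := h1.clm_apply (hasDerivAt_const s ep)
      simpa [hmix] using h2
    have hc := is_const_of_deriv_eq_zero (f := fun s : ℝ => fderiv ℝ f (b + s • eq') ep)
      (fun s => (hψ s).differentiableAt) (fun s => (hψ s).deriv) γ 0
    simpa using hc
  have hg : ∀ t : ℝ, HasDerivAt
      (fun t : ℝ => f (x + t • ep + γ • eq') - f (x + t • ep)) 0 t := by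
    intro t
    have h1 : HasDerivAt (fun t : ℝ => f (x + t • ep + γ • eq'))
        (fderiv ℝ f (x + t • ep + γ • eq') ep) t :=
      (hf1 _).hasFDerivAt.comp_hasDerivAt t ((hline x ep t).add_const (γ • eq'))
    have h2 : HasDerivAt (fun t : ℝ => f (x + t • ep))
        (fderiv ℝ f (x + t • ep) ep) t :=
      (hf1 _).hasFDerivAt.comp_hasDerivAt t (hline x ep t)
    have h3 := h1.sub h2
    rwa [key (x + t • ep), sub_self] at h3
  have hc := is_const_of_deriv_eq_zero
    (f := fun t : ℝ => f (x + t • ep + γ • eq') - f (x + t • ep))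
    (fun t => (hg t).differentiableAt) (fun t => (hg t).deriv) δ 0
  simp only [zero_smul, add_zero] at hc
  linarith
end
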